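/- For every k ≥ 0 and every b_0 ∈ B: rank(b_0) ≥ k if and only if b_0 ∈ N_k. -/

import Mathlib

lemma aux_shift {β : Type*} [AddCommMonoid β] (f : ℕ → β) (a b : ℕ) :
    ∑ v ∈ Finset.Icc (a+1) (b+1), f v = ∑ u ∈ Finset.Icc a b, f (u+1) := by
  rw [← Finset.Ico_add_one_right_eq_Icc, ← Finset.Ico_add_one_right_eq_Icc, Finset.sum_Ico_eq_sum_range,
    Finset.sum_Ico_eq_sum_range]
  refine Finset.sum_congr (by congr 1; omega) fun i hi => by congr 1; omega

lemma aux_one {β : Type*} [AddCommMonoid β] (f : ℕ → β) (b : ℕ) :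
    ∑ j ∈ Finset.Icc 1 b, f j = ∑ i ∈ Finset.range b, f (i+1) := by
  rw [← Finset.Ico_add_one_right_eq_Icc, Finset.sum_Ico_eq_sum_range]
  refine Finset.sum_congr (by congr 1) fun i hi => by congr 1; omega

lemma aux_insert (a b : ℕ) (h : a ≤ b) : Finset.Icc a b = insert a (Finset.Icc (a+1) b) := by
  ext x; simp only [Finset.mem_Icc, Finset.mem_insert]; omega

theorem stmt_5
    {𝕂 : Type*} [RCLike 𝕂]
    {B B' : Type*} [AddCommGroup B] [Module 𝕂 B]
    [AddCommGroup B'] [Module 𝕂 B']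
    (L : ℕ → B →ₗ[𝕂] B')
    (Sb S : ℕ → B →ₗ[𝕂] B')
    (N Nc : ℕ → Submodule 𝕂 B)
    (R Rc : ℕ → Submodule 𝕂 B')
    (P : ℕ → B' →ₗ[𝕂] B')
    (T : ℕ → B' →ₗ[𝕂] B)
    (E M : ℕ → ℕ → B →ₗ[𝕂] B)
    (hL : ∃ i, L i ≠ 0)
    (hN0 : N 0 = ⊤) (hRc0 : Rc 0 = ⊤)
    (hSb1 : Sb 1 = L 0)
    (hSbrec : ∀ k, 1 ≤ k → Sb (k + 1) = ∑ i ∈ Finset.Icc 1 k, (L i).comp (M i k))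
    (hSdef : ∀ k, S (k + 1) = Sb (k + 1) - ∑ i ∈ Finset.Icc 1 k, (P i).comp (Sb (k + 1)))
    (hNdef : ∀ k, N (k + 1) = LinearMap.ker (S (k + 1)) ⊓ N k)
    (hRdef : ∀ k, R (k + 1) = Submodule.map (S (k + 1)) (N k))
    (hNcompl : ∀ k, Disjoint (Nc (k + 1)) (N (k + 1)) ∧ Nc (k + 1) ⊔ N (k + 1) = N k)
    (hRcompl : ∀ k, Disjoint (R (k + 1)) (Rc (k + 1)) ∧ R (k + 1) ⊔ Rc (k + 1) = Rc k)
    (hPrange : ∀ i, 1 ≤ i → LinearMap.range (P i) ≤ R i)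
    (hPid : ∀ i, 1 ≤ i → ∀ y ∈ R i, P i y = y)
    (hPzeroRc : ∀ i, 1 ≤ i → ∀ y ∈ Rc i, P i y = 0)
    (hPzeroR : ∀ i j, 1 ≤ j → j < i → ∀ y ∈ R j, P i y = 0)
    (hTrange : ∀ i, 1 ≤ i → ∀ y, T i y ∈ Nc i)
    (hTS : ∀ i, 1 ≤ i → ∀ x ∈ Nc i, T i (S i x) = x)
    (hST : ∀ i, 1 ≤ i → ∀ y, S i (T i y) = P i y)
    (hE11 : E 1 1 = LinearMap.id)
    (hEdiag : ∀ k, E (k + 1) (k + 1) = LinearMap.id)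
    (hErec : ∀ k i, 1 ≤ i → i ≤ k →
      E i (k + 1) = -((T i).comp (∑ v ∈ Finset.Icc (i + 1) (k + 1), (Sb v).comp (E v (k + 1)))))
    (hM11 : M 1 1 = LinearMap.id)
    (hM1 : ∀ k, 1 ≤ k → M 1 (k + 1) = E 1 (k + 1))
    (hMrec : ∀ k a, 2 ≤ a → a ≤ k + 1 →
      M a (k + 1) = ∑ b ∈ Finset.Icc (a - 1) k, (M (a - 1) b).comp (E (b + 1) (k + 1)))
    (rank : B → ℕ∞)
    (hrank : ∀ b0 : B, rank b0 = sSup {x : ℕ∞ | ∃ m : ℕ, 1 ≤ m ∧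
      (∃ b : ℕ → B, b 0 = b0 ∧
        ∀ l, l + 1 ≤ m → ∑ i ∈ Finset.range (l + 1), L i (b (l - i)) = 0) ∧ x = (m : ℕ∞)})
    :
    ∀ k : ℕ, ∀ b0 : B, (k : ℕ∞) ≤ rank b0 ↔ b0 ∈ N k := by
  -- basic consequences
  have hS1 : S 1 = L 0 := by simpa [hSb1] using hSdef 0
  have hNsucc : ∀ k, N (k + 1) ≤ N k := fun k => by rw [hNdef k]; exact inf_le_right
  have hNle : ∀ j k : ℕ, j ≤ k → N k ≤ N j := by
    intro j k h
    induction k, h using Nat.le_induction with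
    | base => exact le_rfl
    | succ n hn ih => exact le_trans (hNsucc n) ih
  have hRcsucc : ∀ k, Rc (k + 1) ≤ Rc k := fun k => by
    rw [← (hRcompl k).2]; exact le_sup_right
  have hRcle : ∀ j k : ℕ, j ≤ k → Rc k ≤ Rc j := by
    intro j k h
    induction k, h using Nat.le_induction with
    | base => exact le_rfl
    | succ n hn ih => exact le_trans (hRcsucc n) ih
  have hRRc : ∀ j m : ℕ, j < m → R m ≤ Rc j := by
    intro j m h
    obtain ⟨t, rfl⟩ : ∃ t, m = t + 1 := ⟨m - 1, by omega⟩
    refine le_trans ?_ (hRcle j t (by omega))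
    rw [← (hRcompl t).2]; exact le_sup_left
  have hNcN : ∀ v, Nc (v + 1) ≤ N v := fun v => by
    rw [← (hNcompl v).2]; exact le_sup_left
  have hL0 : ∀ z, z ∈ N 1 → L 0 z = 0 := by
    intro z hz
    have h1 := hNdef 0
    norm_num at h1
    rw [h1, Submodule.mem_inf] at hz
    have h2 := hz.1
    rwa [LinearMap.mem_ker, hS1] at h2
  have hMdiag : ∀ k, M (k + 1) (k + 1) = LinearMap.id := by
    intro k
    induction k with
    | zero => exact hM11
    | succ n ih =>
      rw [hMrec (n + 1) (n + 2) (by omega) (by omega)]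
      have h2 : n + 2 - 1 = n + 1 := by omega
      rw [h2, Finset.Icc_self, Finset.sum_singleton, ih, hEdiag (n + 1)]
      simp
  -- the projections sum to identity on R 1 ⊔ ... ⊔ R J
  have hQR : ∀ J m : ℕ, 1 ≤ m → m ≤ J → ∀ y ∈ R m, (∑ j ∈ Finset.Icc 1 J, P j y) = y := by
    intro J m h1 hJ y hy
    rw [Finset.sum_eq_single_of_mem m (Finset.mem_Icc.mpr ⟨h1, hJ⟩)]
    · exact hPid m h1 y hy
    · intro j hj hne
      have hj1 : 1 ≤ j := (Finset.mem_Icc.mp hj).1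
      rcases Nat.lt_or_ge j m with hlt | hge
      · exact hPzeroRc j hj1 y (hRRc j m hlt hy)
      · exact hPzeroR j m h1 (by omega) y hy
  have hQsup : ∀ (J : ℕ) (z : B'), z ∈ (⨆ m ∈ Finset.Icc 1 J, R m) →
      (∑ j ∈ Finset.Icc 1 J, P j z) = z := by
    intro J
    have hker : (⨆ m ∈ Finset.Icc 1 J, R m) ≤
        LinearMap.ker ((∑ j ∈ Finset.Icc 1 J, P j) - LinearMap.id) := by
      refine iSup₂_le fun m hm => ?_
      intro y hy
      have hm' := Finset.mem_Icc.mp hm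
      simp only [LinearMap.mem_ker, LinearMap.sub_apply, LinearMap.id_apply,
        LinearMap.sum_apply]
      rw [hQR J m hm'.1 hm'.2 y hy, sub_self]
    intro z hz
    have h := hker hz
    simp only [LinearMap.mem_ker, LinearMap.sub_apply, LinearMap.id_apply,
      LinearMap.sum_apply, sub_eq_zero] at h
    exact h
  have hRS_le : ∀ J m : ℕ, 1 ≤ m → m ≤ J → R m ≤ ⨆ m ∈ Finset.Icc 1 J, R m := by
    intro J m h1 hJ
    exact le_iSup₂_of_le m (Finset.mem_Icc.mpr ⟨h1, hJ⟩) le_rfl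
  have hRS_mono : ∀ J J' : ℕ, J ≤ J' →
      (⨆ m ∈ Finset.Icc 1 J, R m) ≤ ⨆ m ∈ Finset.Icc 1 J', R m := by
    intro J J' h
    refine iSup₂_le fun m hm => ?_
    have hm' := Finset.mem_Icc.mp hm
    exact hRS_le J' m hm'.1 (by omega)
  -- main joint strong induction
  have key : ∀ k : ℕ,
      (∀ x ∈ N k, ∀ a, 1 ≤ a → a ≤ k →
        ∑ i ∈ Finset.range (k - a + 1), L i (M (a + i) k x) = 0) ∧
      (∀ d : ℕ → B, d 0 = 0 →
        (∀ l, l + 1 ≤ k → ∑ i ∈ Finset.range (l + 1), L i (d (l - i)) = 0) →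
        (∑ i ∈ Finset.Icc 1 k, L i (d (k - i))) ∈ ⨆ m ∈ Finset.Icc 1 k, R m) ∧
      (∀ x : B, (∃ b : ℕ → B, b 0 = x ∧
        ∀ l, l + 1 ≤ k → ∑ i ∈ Finset.range (l + 1), L i (b (l - i)) = 0) → x ∈ N k) := by
    intro k
    induction k using Nat.strong_induction_on with
    | _ k IH =>
    match k with
    | 0 =>
      refine ⟨fun x hx a ha1 ha0 => by omega, fun d hd0 hdc => by simp, fun x _ => by
        rw [hN0]; exact Submodule.mem_top⟩
    | (k + 1) =>
      have hF : ∀ x ∈ N (k + 1), ∀ a, 1 ≤ a → a ≤ k + 1 →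
          ∑ i ∈ Finset.range (k + 1 - a + 1), L i (M (a + i) (k + 1) x) = 0 := by
        intro x hx a ha1 hak
        have hxk : x ∈ N k := hNsucc k hx
        by_cases hatop : a = k + 1
        · subst hatop
          rw [show k + 1 - (k + 1) + 1 = 1 from by omega, Finset.sum_range_one]
          have hid := hMdiag k
          simp only [Nat.add_zero, hid, LinearMap.id_apply]
          exact hL0 x (hNle 1 (k + 1) (by omega) hx)
        · have hak' : a ≤ k := by omega
          have hk1 : 1 ≤ k := by omega
          by_cases ha2 : 2 ≤ a
          · -- middle case 2 ≤ a ≤ k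
            have hEc : ∀ b, b ∈ Finset.Icc (a - 1) k → E (b + 1) (k + 1) x ∈ N b := by
              intro b hb
              have hb' := Finset.mem_Icc.mp hb
              rcases eq_or_lt_of_le hb'.2 with rfl | hlt
              · rw [hEdiag b]
                simpa using hxk
              · rw [hErec k (b + 1) (by omega) (by omega)]
                simp only [LinearMap.neg_apply, LinearMap.comp_apply]
                exact (N b).neg_mem (hNcN b (hTrange (b + 1) (by omega) _))
            have step1 : ∑ i ∈ Finset.range (k + 1 - a + 1), L i (M (a + i) (k + 1) x)
                = ∑ i ∈ Finset.range (k + 1 - a + 1), ∑ b ∈ Finset.Icc (a - 1 + i) k,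
                    L i (M (a - 1 + i) b (E (b + 1) (k + 1) x)) := by
              refine Finset.sum_congr rfl fun i hi => ?_
              have hi' := Finset.mem_range.mp hi
              rw [hMrec k (a + i) (by omega) (by omega),
                show a + i - 1 = a - 1 + i from by omega]
              simp [LinearMap.sum_apply, LinearMap.comp_apply]
            have step2 : ∑ i ∈ Finset.range (k + 1 - a + 1), ∑ b ∈ Finset.Icc (a - 1 + i) k,
                    L i (M (a - 1 + i) b (E (b + 1) (k + 1) x))
                = ∑ b ∈ Finset.Icc (a - 1) k, ∑ i ∈ Finset.range (b - (a - 1) + 1),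
                    L i (M (a - 1 + i) b (E (b + 1) (k + 1) x)) := by
              refine Finset.sum_comm' ?_
              intro i b
              simp only [Finset.mem_range, Finset.mem_Icc]
              omega
            rw [step1, step2]
            refine Finset.sum_eq_zero fun b hb => ?_
            have hb' := Finset.mem_Icc.mp hb
            exact (IH b (by omega)).1 _ (hEc b hb) (a - 1) (by omega) hb'.1
          · have ha1' : a = 1 := by omega
            subst ha1'
            set W : ℕ → B' := fun i => ∑ v ∈ Finset.Icc (i + 1) (k + 1), Sb v (E v (k + 1) x)
              with hWdef
            have hD : ∀ t i, i + t = k → 1 ≤ i → W i = ∑ j ∈ Finset.Icc 1 i, P j (W i) := by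
              intro t
              induction t with
              | zero =>
                intro i hi h1
                obtain rfl : i = k := by omega
                have hWk : W i = Sb (i + 1) x := by
                  simp only [hWdef]
                  rw [Finset.Icc_self, Finset.sum_singleton, hEdiag i]
                  simp
                have hSx : S (i + 1) x = 0 := by
                  rw [hNdef i, Submodule.mem_inf] at hx
                  exact LinearMap.mem_ker.mp hx.1
                have h4 := congrArg (fun (f : B →ₗ[𝕂] B') => f x) (hSdef i)
                simp only [LinearMap.sub_apply, LinearMap.sum_apply,
                  LinearMap.comp_apply] at h4
                rw [hSx] at h4
                rw [hWk]
                exact sub_eq_zero.mp h4.symm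
              | succ t ih =>
                intro i hi h1
                have hik : i + 1 ≤ k := by omega
                have hsplit : W i = Sb (i + 1) (E (i + 1) (k + 1) x) + W (i + 1) := by
                  simp only [hWdef]
                  rw [aux_insert (i + 1) (k + 1) (by omega),
                    Finset.sum_insert (by simp [Finset.mem_Icc])]
                have hprev := (ih (i + 1) (by omega) (by omega)).trans
                  (Finset.sum_Icc_succ_top (by omega) (fun j => P j (W (i + 1))))
                have hEi : E (i + 1) (k + 1) x = -(T (i + 1) (W (i + 1))) := by
                  rw [hErec k (i + 1) (by omega) hik]
                  simp only [LinearMap.neg_apply, LinearMap.comp_apply]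
                  congr 1
                  simp only [hWdef, LinearMap.sum_apply, LinearMap.comp_apply]
                have hSbE : Sb (i + 1) (E (i + 1) (k + 1) x)
                    - ∑ j ∈ Finset.Icc 1 i, P j (Sb (i + 1) (E (i + 1) (k + 1) x))
                    = -(P (i + 1) (W (i + 1))) := by
                  have h4 := congrArg (fun (f : B →ₗ[𝕂] B') => f (E (i + 1) (k + 1) x)) (hSdef i)
                  simp only [LinearMap.sub_apply, LinearMap.sum_apply,
                    LinearMap.comp_apply] at h4
                  rw [← h4, hEi, map_neg, hST (i + 1) (by omega)]
                rw [hsplit]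
                have hadd : ∑ j ∈ Finset.Icc 1 i, P j (Sb (i + 1) (E (i + 1) (k + 1) x) + W (i + 1))
                    = (∑ j ∈ Finset.Icc 1 i, P j (Sb (i + 1) (E (i + 1) (k + 1) x)))
                      + ∑ j ∈ Finset.Icc 1 i, P j (W (i + 1)) := by
                  rw [← Finset.sum_add_distrib]
                  exact Finset.sum_congr rfl fun j _ => map_add _ _ _
                rw [hadd, ← sub_eq_zero]
                have hW6 : W (i + 1) - ∑ j ∈ Finset.Icc 1 i, P j (W (i + 1))
                    = P (i + 1) (W (i + 1)) := sub_eq_of_eq_add' hprev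
                calc Sb (i + 1) (E (i + 1) (k + 1) x) + W (i + 1)
                    - ((∑ j ∈ Finset.Icc 1 i, P j (Sb (i + 1) (E (i + 1) (k + 1) x)))
                      + ∑ j ∈ Finset.Icc 1 i, P j (W (i + 1)))
                    = (Sb (i + 1) (E (i + 1) (k + 1) x)
                        - ∑ j ∈ Finset.Icc 1 i, P j (Sb (i + 1) (E (i + 1) (k + 1) x)))
                      + (W (i + 1) - ∑ j ∈ Finset.Icc 1 i, P j (W (i + 1))) := by abel
                  _ = -(P (i + 1) (W (i + 1))) + P (i + 1) (W (i + 1)) := by rw [hSbE, hW6]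
                  _ = 0 := by abel
            have hgoal' : ∑ i ∈ Finset.range (k + 1), L i (M (1 + i) (k + 1) x)
                = (∑ i ∈ Finset.range k, L (i + 1) (M (1 + (i + 1)) (k + 1) x))
                  + L 0 (M (1 + 0) (k + 1) x) :=
              Finset.sum_range_succ' _ k
            have part1 : ∑ i ∈ Finset.range k, L (i + 1) (M (1 + (i + 1)) (k + 1) x)
                = ∑ b ∈ Finset.Icc 1 k, Sb (b + 1) (E (b + 1) (k + 1) x) := by
              have e1 : ∀ i ∈ Finset.range k, L (i + 1) (M (1 + (i + 1)) (k + 1) x)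
                  = ∑ b ∈ Finset.Icc (i + 1) k, L (i + 1) (M (i + 1) b (E (b + 1) (k + 1) x)) := by
                intro i hi
                have hi' := Finset.mem_range.mp hi
                rw [show 1 + (i + 1) = i + 2 from by omega,
                  hMrec k (i + 2) (by omega) (by omega),
                  show i + 2 - 1 = i + 1 from by omega]
                simp [LinearMap.sum_apply, LinearMap.comp_apply]
              rw [Finset.sum_congr rfl e1]
              rw [Finset.sum_comm' (s := Finset.range k) (t := fun i => Finset.Icc (i + 1) k)
                  (t' := Finset.Icc 1 k) (s' := fun b => Finset.range b)
                  (by intro i b; simp only [Finset.mem_range, Finset.mem_Icc]; omega)]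
              refine Finset.sum_congr rfl fun b hb => ?_
              have hb1 := (Finset.mem_Icc.mp hb).1
              have h5 := congrArg (fun (f : B →ₗ[𝕂] B') => f (E (b + 1) (k + 1) x)) (hSbrec b hb1)
              simp only [LinearMap.sum_apply, LinearMap.comp_apply] at h5
              rw [h5]
              exact (aux_one (fun j => L j (M j b (E (b + 1) (k + 1) x))) b).symm
            have part1' : W 1 = ∑ b ∈ Finset.Icc 1 k, Sb (b + 1) (E (b + 1) (k + 1) x) := by
              simp only [hWdef]
              exact aux_shift _ 1 k
            have part0 : L 0 (M (1 + 0) (k + 1) x) = -(P 1 (W 1)) := by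
              have hz : (∑ v ∈ Finset.Icc (1 + 1) (k + 1), (Sb v).comp (E v (k + 1))) x
                  = W 1 := by
                simp only [hWdef, LinearMap.sum_apply, LinearMap.comp_apply]
              rw [show 1 + 0 = 1 from rfl, hM1 k hk1, hErec k 1 le_rfl hk1]
              simp only [LinearMap.neg_apply, LinearMap.comp_apply]
              rw [hz, map_neg, ← hS1, hST 1 le_rfl]
            have hD1 := hD (k - 1) 1 (by omega) le_rfl
            rw [Finset.Icc_self, Finset.sum_singleton] at hD1
            rw [show k + 1 - 1 + 1 = k + 1 from by omega, hgoal', part1, ← part1', part0,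
              ← hD1]
            abel
      have hA : ∀ d : ℕ → B, d 0 = 0 →
          (∀ l, l + 1 ≤ k + 1 → ∑ i ∈ Finset.range (l + 1), L i (d (l - i)) = 0) →
          (∑ i ∈ Finset.Icc 1 (k + 1), L i (d (k + 1 - i))) ∈
            ⨆ m ∈ Finset.Icc 1 (k + 1), R m := by
        intro d hd0 hdc
        rcases Nat.eq_zero_or_pos k with rfl | hk1
        · rw [Finset.Icc_self, Finset.sum_singleton,
            show (0:ℕ) + 1 - 1 = 0 from by omega, hd0, map_zero]
          exact Submodule.zero_mem _
        · have hd' : ∀ l, l + 1 ≤ k → ∑ i ∈ Finset.range (l + 1), L i (d (l - i + 1)) = 0 := by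
            intro l hl
            have h1 := hdc (l + 1) (by omega)
            rw [Finset.sum_range_succ, show l + 1 - (l + 1) = 0 from by omega, hd0,
              map_zero, add_zero] at h1
            rw [← h1]
            refine Finset.sum_congr rfl fun i hi => ?_
            have hi' := Finset.mem_range.mp hi
            rw [show l - i + 1 = l + 1 - i from by omega]
          have hx1 : d 1 ∈ N k := (IH k (by omega)).2.2 (d 1) ⟨fun j => d (j + 1), rfl, hd'⟩
          have hFk := (IH k (by omega)).1
          have hMk : M k k = LinearMap.id := by
            have h := hMdiag (k - 1)
            rwa [show k - 1 + 1 = k from by omega] at h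
          have hcanon : ∀ l, l + 1 ≤ k →
              ∑ i ∈ Finset.range (l + 1), L i (M (k - (l - i)) k (d 1)) = 0 := by
            intro l hl
            have h := hFk (d 1) hx1 (k - l) (by omega) (by omega)
            rw [show k - (k - l) + 1 = l + 1 from by omega] at h
            rw [← h]
            refine Finset.sum_congr rfl fun i hi => ?_
            have hi' := Finset.mem_range.mp hi
            rw [show k - (l - i) = k - l + i from by omega]
          have he0 : d (0 + 1) - M (k - 0) k (d 1) = 0 := by
            rw [Nat.sub_zero, hMk]
            simp
          have hec : ∀ l, l + 1 ≤ k → ∑ i ∈ Finset.range (l + 1),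
              L i (d (l - i + 1) - M (k - (l - i)) k (d 1)) = 0 := by
            intro l hl
            simp only [map_sub]
            rw [Finset.sum_sub_distrib, hd' l hl, hcanon l hl, sub_zero]
          have hAk := (IH k (by omega)).2.1 (fun j => d (j + 1) - M (k - j) k (d 1)) he0
            (fun l hl => hec l hl)
          rw [Finset.sum_Icc_succ_top (by omega : 1 ≤ k + 1)
            (fun i => L i (d (k + 1 - i))), show k + 1 - (k + 1) = 0 from by omega, hd0,
            map_zero, add_zero]
          have hsplit : ∀ i ∈ Finset.Icc 1 k, L i (d (k + 1 - i))
              = L i (d (k - i + 1) - M (k - (k - i)) k (d 1)) + L i (M i k (d 1)) := by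
            intro i hi
            have hi' := Finset.mem_Icc.mp hi
            rw [map_sub, show k - (k - i) = i from by omega,
              show k + 1 - i = k - i + 1 from by omega]
            abel
          rw [Finset.sum_congr rfl hsplit, Finset.sum_add_distrib]
          refine Submodule.add_mem _ (hRS_mono k (k + 1) (by omega) hAk) ?_
          have hSb : ∑ i ∈ Finset.Icc 1 k, L i (M i k (d 1)) = Sb (k + 1) (d 1) := by
            have h := congrArg (fun (f : B →ₗ[𝕂] B') => f (d 1)) (hSbrec k hk1)
            simp only [LinearMap.sum_apply, LinearMap.comp_apply] at h
            exact h.symm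
          rw [hSb]
          have h4 := congrArg (fun (f : B →ₗ[𝕂] B') => f (d 1)) (hSdef k)
          simp only [LinearMap.sub_apply, LinearMap.sum_apply, LinearMap.comp_apply] at h4
          have h5 : Sb (k + 1) (d 1)
              = S (k + 1) (d 1) + ∑ j ∈ Finset.Icc 1 k, P j (Sb (k + 1) (d 1)) := by
            rw [h4]; abel
          rw [h5]
          refine Submodule.add_mem _ ?_ ?_
          · refine hRS_le (k + 1) (k + 1) (by omega) le_rfl ?_
            rw [hRdef k]
            exact ⟨d 1, hx1, rfl⟩
          · refine Submodule.sum_mem _ fun j hj => ?_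
            have hj' := Finset.mem_Icc.mp hj
            exact hRS_le (k + 1) j hj'.1 (by omega) (hPrange j hj'.1 ⟨_, rfl⟩)
      have hC : ∀ x : B, (∃ b : ℕ → B, b 0 = x ∧
          ∀ l, l + 1 ≤ k + 1 → ∑ i ∈ Finset.range (l + 1), L i (b (l - i)) = 0) →
          x ∈ N (k + 1) := by
        rintro x ⟨b, hb0, hbc⟩
        have hR1 : R 1 = Submodule.map (S 1) (N 0) := hRdef 0
        rcases Nat.eq_zero_or_pos k with rfl | hk1
        · rw [hNdef 0, Submodule.mem_inf]
          have h2 := hbc 0 (by omega)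
          rw [Finset.sum_range_one, Nat.sub_zero, hb0] at h2
          have h3 : S 1 x = 0 := by rw [hS1]; exact h2
          exact ⟨LinearMap.mem_ker.mpr h3, by rw [hN0]; trivial⟩
        · have hxk : x ∈ N k := (IH k (by omega)).2.2 x ⟨b, hb0, fun l hl => hbc l (by omega)⟩
          have hFk := (IH k (by omega)).1
          have hMk : M k k = LinearMap.id := by
            have h := hMdiag (k - 1)
            rwa [show k - 1 + 1 = k from by omega] at h
          have hcanon : ∀ l, l + 1 ≤ k →
              ∑ i ∈ Finset.range (l + 1), L i (M (k - (l - i)) k x) = 0 := by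
            intro l hl
            have h := hFk x hxk (k - l) (by omega) (by omega)
            rw [show k - (k - l) + 1 = l + 1 from by omega] at h
            rw [← h]
            refine Finset.sum_congr rfl fun i hi => ?_
            have hi' := Finset.mem_range.mp hi
            rw [show k - (l - i) = k - l + i from by omega]
          have hd0 : b 0 - M (k - 0) k x = 0 := by
            rw [Nat.sub_zero, hMk, hb0]
            simp
          have hdc : ∀ l, l + 1 ≤ k → ∑ i ∈ Finset.range (l + 1),
              L i (b (l - i) - M (k - (l - i)) k x) = 0 := by
            intro l hl
            simp only [map_sub]
            rw [Finset.sum_sub_distrib, hbc l (by omega), hcanon l hl, sub_zero]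
          have hAk := (IH k (by omega)).2.1 (fun j => b j - M (k - j) k x) hd0
            (fun l hl => hdc l hl)
          have htop := hbc k (by omega)
          rw [Finset.sum_range_succ'] at htop
          have hb' : ∑ i ∈ Finset.Icc 1 k, L i (b (k - i)) = -(L 0 (b (k - 0))) := by
            rw [aux_one (fun j => L j (b (k - j))) k]
            exact eq_neg_of_add_eq_zero_left htop
          have hSbx : Sb (k + 1) x = ∑ i ∈ Finset.Icc 1 k, L i (M i k x) := by
            have h := congrArg (fun (f : B →ₗ[𝕂] B') => f x) (hSbrec k hk1)
            simpa only [LinearMap.sum_apply, LinearMap.comp_apply] using h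
          have hsplit : ∀ i ∈ Finset.Icc 1 k, L i (M i k x)
              = L i (b (k - i)) - L i (b (k - i) - M (k - (k - i)) k x) := by
            intro i hi
            have hi' := Finset.mem_Icc.mp hi
            rw [map_sub, show k - (k - i) = i from by omega]
            abel
          have hmem : Sb (k + 1) x ∈ ⨆ m ∈ Finset.Icc 1 k, R m := by
            rw [hSbx, Finset.sum_congr rfl hsplit, Finset.sum_sub_distrib, hb']
            refine Submodule.sub_mem _ (Submodule.neg_mem _ ?_) hAk
            refine hRS_le k 1 le_rfl hk1 ?_
            rw [hR1]
            exact ⟨b (k - 0), by rw [hN0]; trivial, by rw [hS1]⟩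
          have h4 := congrArg (fun (f : B →ₗ[𝕂] B') => f x) (hSdef k)
          simp only [LinearMap.sub_apply, LinearMap.sum_apply, LinearMap.comp_apply] at h4
          have h5 := hQsup k _ hmem
          rw [hNdef k, Submodule.mem_inf]
          exact ⟨LinearMap.mem_ker.mpr (by rw [h4, h5, sub_self]), hxk⟩
      exact ⟨hF, hA, hC⟩
  -- final assembly
  intro k x
  cases k with
  | zero =>
    constructor
    · intro _
      rw [hN0]
      trivial
    · intro _
      simp
  | succ n =>
    constructor
    · intro hle
      rw [hrank x] at hle
      by_cases hq : ∃ m : ℕ, (n + 1) ≤ m ∧ ∃ b : ℕ → B, b 0 = x ∧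
          ∀ l, l + 1 ≤ m → ∑ i ∈ Finset.range (l + 1), L i (b (l - i)) = 0
      · obtain ⟨m, hmn, b, hb0, hbc⟩ := hq
        exact (key (n + 1)).2.2 x ⟨b, hb0, fun l hl => hbc l (by omega)⟩
      · exfalso
        have hbound : sSup {y : ℕ∞ | ∃ m : ℕ, 1 ≤ m ∧ (∃ b : ℕ → B, b 0 = x ∧
            ∀ l, l + 1 ≤ m → ∑ i ∈ Finset.range (l + 1), L i (b (l - i)) = 0) ∧ y = (m : ℕ∞)}
            ≤ (n : ℕ∞) := by
          refine sSup_le ?_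
          rintro y ⟨m, hm1, hch, rfl⟩
          have hmn : m ≤ n := by
            by_contra hmn
            exact hq ⟨m, by omega, hch⟩
          exact_mod_cast hmn
        have h6 := le_trans hle hbound
        have h7 : (n + 1 : ℕ) ≤ n := by exact_mod_cast h6
        omega
    · intro hx
      rw [hrank x]
      refine le_sSup ⟨n + 1, by omega, ⟨fun j => M (n + 1 - j) (n + 1) x, ?_, ?_⟩, rfl⟩
      · show M (n + 1 - 0) (n + 1) x = x
        rw [Nat.sub_zero, hMdiag n]
        rfl
      · intro l hl
        have h := (key (n + 1)).1 x hx (n + 1 - l) (by omega) (by omega)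
        rw [show n + 1 - (n + 1 - l) + 1 = l + 1 from by omega] at h
        rw [← h]
        refine Finset.sum_congr rfl fun i hi => ?_
        have hi' := Finset.mem_range.mp hi
        show L i (M (n + 1 - (l - i)) (n + 1) x) = L i (M (n + 1 - l + i) (n + 1) x)
        rw [show n + 1 - (l - i) = n + 1 - l + i from by omega]
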